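/- Let β = (β_j)_{j≥1} be a sequence of non-negative reals, and let (𝔸_ν), (𝔹_ν) be non-negative numbers indexed by finitely supported multi-indices satisfying 𝔸_ν ≤ ∑_{m ≤ ν, m ≠ ν} C(ν, m) β^{ν−m} 𝔸_m + 𝔹_ν for every finitely supported ν (including ν = 0). Then 𝔸_ν ≤ ∑_{k ≤ ν} C(ν, k) Λ_{|k|} β^k 𝔹_{ν−k} for all finitely supported ν, where Λ_0 = 1 and Λ_n = ∑_{i=0}^{n−1} C(n,i) Λ_i for n ≥ 1. -/

import Mathlib

open Finset

section helpers
-- nat choose identity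
lemma myChoose (a b c : ℕ) (hba : b ≤ a) (hcb : c ≤ b) :
    a.choose b * b.choose c = a.choose (a - b + c) * (a - b + c).choose c := by
  have h1 : a - b + c ≤ a := by omega
  have h2 : c ≤ a - b + c := by omega
  rw [Nat.choose_mul hcb, Nat.choose_mul h2]
  congr 1
  have h3 : a - b + c - c = a - b := by omega
  rw [h3]
  have h4 := Nat.choose_symm (show b - c ≤ a - c by omega) (n := a - c)
  rw [← h4]
  congr 1
  omega

lemma deg_eq_sum (ν : ℕ →₀ ℕ) {s : Finset ℕ} (hs : ν.support ⊆ s) :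
    (ν.sum fun _ n => n) = ∑ j ∈ s, ν j := by
  rw [Finsupp.sum]
  exact Finset.sum_subset hs (fun x _ hx => Finsupp.notMem_support_iff.mp hx)

lemma deg_lt {m ν : ℕ →₀ ℕ} (h : m ≤ ν) (hne : m ≠ ν) :
    (m.sum fun _ n => n) < (ν.sum fun _ n => n) := by
  have hsupp : m.support ⊆ ν.support := by
    intro j hj
    simp only [Finsupp.mem_support_iff] at *
    have := (Finsupp.le_def.mp h) j
    omega
  rw [deg_eq_sum m hsupp, deg_eq_sum ν (subset_refl _)]
  obtain ⟨j, hj⟩ : ∃ j, m j < ν j := by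
    by_contra hc
    push_neg at hc
    exact hne (le_antisymm h (Finsupp.le_def.mpr hc))
  have hjs : j ∈ ν.support := by
    simp only [Finsupp.mem_support_iff]; omega
  exact Finset.sum_lt_sum (fun i _ => Finsupp.le_def.mp h i) ⟨j, hjs, hj⟩

-- support monotone
lemma supp_mono {m ν : ℕ →₀ ℕ} (h : m ≤ ν) : m.support ⊆ ν.support := by
  intro j hj
  simp only [Finsupp.mem_support_iff] at *
  have := (Finsupp.le_def.mp h) j
  omega

-- extension of choose-products
lemma prod_choose_extend (x l : ℕ →₀ ℕ) (hl : l ≤ x) {s : Finset ℕ} (hs : x.support ⊆ s) :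
    ∏ j ∈ s, (x j).choose (l j) = ∏ j ∈ x.support, (x j).choose (l j) := by
  refine (Finset.prod_subset hs fun j _ hj => ?_).symm
  have hx : x j = 0 := Finsupp.notMem_support_iff.mp hj
  have hlj : l j = 0 := by have := Finsupp.le_def.mp hl j; omega
  simp [hx, hlj]

-- β-products as Finsupp.prod, multiplicative
lemma betaprod_add (β : ℕ → ℝ) (x y : ℕ →₀ ℕ) :
    (∏ j ∈ (x + y).support, β j ^ ((x + y) j))
      = (∏ j ∈ x.support, β j ^ x j) * ∏ j ∈ y.support, β j ^ y j := by
  have hx : ∀ z : ℕ →₀ ℕ, (∏ j ∈ z.support, β j ^ z j) = z.prod fun j n => β j ^ n := by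
    intro z; rfl
  rw [hx, hx, hx, Finsupp.prod_add_index' (fun _ => pow_zero _) (fun j a b => pow_add _ _ _)]

lemma vander_sum (n M : ℕ) (g : ℕ → ℝ) :
    ∑ c ∈ range (n+1), (n.choose c : ℝ) * ∑ i ∈ range (M+1), (M.choose i : ℝ) * g (c+i)
    = ∑ i' ∈ range (n+M+1), ((n+M).choose i' : ℝ) * g i' := by
  set N := n + M with hN
  have step1 : ∑ i' ∈ range (N+1), ((n+M).choose i' : ℝ) * g i'
      = ∑ i' ∈ range (N+1), ∑ p ∈ antidiagonal i',
          (n.choose p.1 : ℝ) * (M.choose p.2 : ℝ) * g (p.1 + p.2) := by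
    refine Finset.sum_congr rfl fun i' _ => ?_
    rw [Nat.add_choose_eq, Nat.cast_sum, Finset.sum_mul]
    refine Finset.sum_congr rfl fun p hp => ?_
    rw [Finset.HasAntidiagonal.mem_antidiagonal] at hp
    rw [hp]; push_cast; ring
  have step2 : ∑ i' ∈ range (N+1), ∑ p ∈ antidiagonal i',
          (n.choose p.1 : ℝ) * (M.choose p.2 : ℝ) * g (p.1 + p.2)
      = ∑ p ∈ (range (N+1)).biUnion (fun i' => antidiagonal i'),
          (n.choose p.1 : ℝ) * (M.choose p.2 : ℝ) * g (p.1 + p.2) := by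
    rw [Finset.sum_biUnion]
    intro x _ y _ hxy
    simp only [Function.onFun, Finset.disjoint_left]
    intro p hp hq
    rw [Finset.HasAntidiagonal.mem_antidiagonal] at hp hq
    exact hxy (hp ▸ hq)
  have hset : (range (N+1)).biUnion (fun i' => antidiagonal i')
      = (range (N+1) ×ˢ range (N+1)).filter (fun p => p.1 + p.2 ≤ N) := by
    ext p
    simp only [Finset.mem_biUnion, Finset.mem_range, Finset.HasAntidiagonal.mem_antidiagonal,
      Finset.mem_filter, Finset.mem_product]
    constructor
    · rintro ⟨i', hi', rfl⟩; omega
    · rintro ⟨⟨h1, h2⟩, h3⟩; exact ⟨p.1 + p.2, by omega, rfl⟩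
  have hsub : range (n+1) ×ˢ range (M+1)
      ⊆ (range (N+1) ×ˢ range (N+1)).filter (fun p => p.1 + p.2 ≤ N) := by
    intro p hp
    simp only [Finset.mem_filter, Finset.mem_product, Finset.mem_range] at *
    omega
  have step3 : ∑ p ∈ (range (N+1) ×ˢ range (N+1)).filter (fun p => p.1 + p.2 ≤ N),
          (n.choose p.1 : ℝ) * (M.choose p.2 : ℝ) * g (p.1 + p.2)
      = ∑ p ∈ range (n+1) ×ˢ range (M+1),
          (n.choose p.1 : ℝ) * (M.choose p.2 : ℝ) * g (p.1 + p.2) := by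
    refine (Finset.sum_subset hsub fun p hp hnp => ?_).symm
    simp only [Finset.mem_filter, Finset.mem_product, Finset.mem_range] at hp hnp
    have : n < p.1 ∨ M < p.2 := by omega
    rcases this with h | h
    · rw [Nat.choose_eq_zero_of_lt h]; simp
    · rw [Nat.choose_eq_zero_of_lt h]; simp
  rw [step1, step2, hset, step3, Finset.sum_product]
  refine Finset.sum_congr rfl fun c _ => ?_
  rw [Finset.mul_sum]
  refine Finset.sum_congr rfl fun i _ => ?_
  ring
end helpers
lemma key_vander (k : ℕ →₀ ℕ) :
    ∀ g : ℕ → ℝ,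
    ∑ l ∈ Finset.Iic k, (∏ j ∈ k.support, ((k j).choose (l j) : ℝ)) * g (l.sum fun _ n => n)
    = ∑ i ∈ range ((k.sum fun _ n => n) + 1), (((k.sum fun _ n => n)).choose i : ℝ) * g i := by
  induction k using Finsupp.induction with
  | zero =>
    intro g
    have h0 : Finset.Iic (0 : ℕ →₀ ℕ) = {0} := by
      ext u; simp [Finset.mem_Iic, le_zero_iff]
    rw [h0]
    simp [Finsupp.sum_zero_index]
  | single_add a n f haf hn ih =>
    intro g
    have hfa : f a = 0 := Finsupp.notMem_support_iff.mp haf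
    have hdisj : Disjoint (Finsupp.single a n).support f.support := by
      rw [Finsupp.support_single_ne_zero a hn]
      simp [haf]
    have hsupp : (Finsupp.single a n + f).support = insert a f.support := by
      rw [Finsupp.support_add_eq hdisj, Finsupp.support_single_ne_zero a hn]
      rfl
    have hka : (Finsupp.single a n + f) a = n := by
      simp [Finsupp.single_apply, hfa]
    have hdeg : ((Finsupp.single a n + f).sum fun _ x => x) = n + (f.sum fun _ x => x) := by
      rw [Finsupp.sum_add_index' (fun _ => rfl) (fun _ _ _ => rfl),
        Finsupp.sum_single_index rfl]
    have hmem : ∀ u ∈ Finset.Iic (Finsupp.single a n + f),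
        u a ∈ range (n+1) ∧ u.erase a ≤ f := by
      intro u hu
      rw [Finset.mem_Iic] at hu
      have hu' := Finsupp.le_def.mp hu
      constructor
      · have := hu' a
        rw [hka] at this
        simp [Nat.lt_succ_iff, this]
      · rw [Finsupp.le_def]
        intro j
        by_cases hja : j = a
        · rw [hja]; simp [Finsupp.erase_same]
        · rw [Finsupp.erase_ne hja]
          have := hu' j
          simpa [Finsupp.single_apply, (Ne.symm hja)] using this
    have hmem2 : ∀ p : ℕ × (ℕ →₀ ℕ), p ∈ range (n+1) ×ˢ Finset.Iic f →
        Finsupp.single a p.1 + p.2 ≤ Finsupp.single a n + f := by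
      rintro ⟨c, l⟩ hp
      rw [Finset.mem_product, Finset.mem_range, Finset.mem_Iic] at hp
      rw [Finsupp.le_def]
      intro j
      by_cases hja : j = a
      · rw [hja]
        have hla : l a = 0 := Nat.le_antisymm (hfa ▸ Finsupp.le_def.mp hp.2 a) (Nat.zero_le _)
        simp [Finsupp.single_apply, hla, hfa]
        omega
      · have := Finsupp.le_def.mp hp.2 j
        simp [Finsupp.single_apply, Ne.symm hja]
        exact this
    have hla0 : ∀ l : ℕ →₀ ℕ, l ≤ f → l a = 0 := fun l hl =>
      Nat.le_antisymm (hfa ▸ Finsupp.le_def.mp hl a) (Nat.zero_le _)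
    have hre : ∑ l ∈ Finset.Iic (Finsupp.single a n + f),
        (∏ j ∈ (Finsupp.single a n + f).support,
          (((Finsupp.single a n + f) j).choose (l j) : ℝ)) * g (l.sum fun _ x => x)
        = ∑ p ∈ range (n+1) ×ˢ Finset.Iic f,
            (n.choose p.1 : ℝ) * ((∏ j ∈ f.support, ((f j).choose (p.2 j) : ℝ))
              * g (p.1 + (p.2.sum fun _ x => x))) := by
      refine Finset.sum_nbij' (fun u => (u a, u.erase a))
        (fun p => Finsupp.single a p.1 + p.2) ?_ ?_ ?_ ?_ ?_
      · intro u hu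
        rw [Finset.mem_product, Finset.mem_Iic]
        exact ⟨(hmem u hu).1, (hmem u hu).2⟩
      · intro p hp
        rw [Finset.mem_Iic]
        exact hmem2 p hp
      · -- left inverse : single a (u a) + erase a u = u
        intro u _
        simp only
        rw [Finsupp.single_add_erase]
      · -- right inverse
        rintro ⟨c, l⟩ hp
        rw [Finset.mem_product, Finset.mem_range, Finset.mem_Iic] at hp
        have hla : l a = 0 := hla0 l hp.2
        have h1 : (Finsupp.single a c + l) a = c := by simp [Finsupp.single_apply, hla]
        have h2 : (Finsupp.single a c + l).erase a = l := by
          ext j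
          by_cases hja : j = a
          · rw [hja]; simp [Finsupp.erase_same, hla]
          · simp [Finsupp.erase_ne hja, Finsupp.single_apply, Ne.symm hja]
        simp only [h1, h2]
      · -- value equality
        intro u hu
        have hua : u a ∈ range (n+1) := (hmem u hu).1
        have hue : u.erase a ≤ f := (hmem u hu).2
        rw [hsupp, Finset.prod_insert haf, hka]
        have hprod : ∏ j ∈ f.support, (((Finsupp.single a n + f) j).choose (u j) : ℝ)
            = ∏ j ∈ f.support, ((f j).choose ((u.erase a) j) : ℝ) := by
          refine Finset.prod_congr rfl fun j hj => ?_
          have hja : j ≠ a := by rintro rfl; exact haf hj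
          rw [Finsupp.erase_ne hja]
          congr 2
          simp [Finsupp.single_apply, Ne.symm hja]
        have hdegu : (u.sum fun _ x => x) = u a + ((u.erase a).sum fun _ x => x) := by
          conv_lhs => rw [← Finsupp.single_add_erase a u]
          rw [Finsupp.sum_add_index' (fun _ => rfl) (fun _ _ _ => rfl),
            Finsupp.sum_single_index rfl]
        rw [hprod, hdegu]
        ring
    rw [hre, Finset.sum_product, hdeg]
    have hstep : ∀ c ∈ range (n+1),
        ∑ l ∈ Finset.Iic f, (n.choose c : ℝ) *
          ((∏ j ∈ f.support, ((f j).choose (l j) : ℝ)) * g (c + (l.sum fun _ x => x)))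
        = (n.choose c : ℝ) * ∑ i ∈ range ((f.sum fun _ x => x) + 1),
            (((f.sum fun _ x => x)).choose i : ℝ) * g (c + i) := by
      intro c _
      rw [← Finset.mul_sum, ih (fun i => g (c + i))]
    rw [Finset.sum_congr rfl hstep, vander_sum]

lemma deg_eq_zero_iff (k : ℕ →₀ ℕ) : (k.sum fun _ n => n) = 0 ↔ k = 0 := by
  constructor
  · intro h
    ext j
    by_contra hj
    have hjs : j ∈ k.support := Finsupp.mem_support_iff.mpr (by simpa using hj)
    have : k j ≤ k.sum fun _ n => n := Finset.single_le_sum (fun _ _ => Nat.zero_le _) hjs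
    simp at hj
    omega
  · rintro rfl; simp

lemma lambda_rec (Λ : ℕ → ℝ) (hΛ0 : Λ 0 = 1)
    (hΛ : ∀ n : ℕ, 1 ≤ n → Λ n = ∑ i ∈ Finset.range n, (n.choose i : ℝ) * Λ i)
    (k : ℕ →₀ ℕ) (hk : k ≠ 0) :
    ∑ l ∈ (Finset.Iic k).erase k,
        (∏ j ∈ k.support, ((k j).choose (l j) : ℝ)) * Λ (l.sum fun _ n => n)
      = Λ (k.sum fun _ n => n) := by
  have hN : 1 ≤ (k.sum fun _ n => n) := by
    rcases Nat.eq_zero_or_pos (k.sum fun _ n => n) with h | h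
    · exact absurd ((deg_eq_zero_iff k).mp h) hk
    · exact h
  have h1 := key_vander k Λ
  rw [Finset.sum_range_succ, Nat.choose_self, ← hΛ _ hN] at h1
  rw [← Finset.sum_erase_add _ _ (Finset.mem_Iic.mpr le_rfl)] at h1
  have h2 : (∏ j ∈ k.support, ((k j).choose (k j) : ℝ)) * Λ (k.sum fun _ n => n)
      = Λ (k.sum fun _ n => n) := by
    simp [Nat.choose_self]
  rw [h2] at h1
  push_cast at h1 ⊢
  linarith

lemma swap_eq (β : ℕ → ℝ) (B : (ℕ →₀ ℕ) → ℝ) (Λ : ℕ → ℝ) (hΛ0 : Λ 0 = 1)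
    (hΛ : ∀ n : ℕ, 1 ≤ n → Λ n = ∑ i ∈ Finset.range n, (n.choose i : ℝ) * Λ i)
    (ν : ℕ →₀ ℕ) :
    (∑ m ∈ (Finset.Iic ν).erase ν,
        ((∏ j ∈ ν.support, (ν j).choose (m j)) : ℝ) *
          (∏ j ∈ (ν - m).support, β j ^ ((ν - m) j)) *
          (∑ l ∈ Finset.Iic m,
            ((∏ j ∈ m.support, (m j).choose (l j)) : ℝ) *
              Λ (l.sum fun _ n => n) *
              (∏ j ∈ l.support, β j ^ l j) * B (m - l))) + B ν
    = ∑ k ∈ Finset.Iic ν,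
        ((∏ j ∈ ν.support, (ν j).choose (k j)) : ℝ) *
          Λ (k.sum fun _ n => n) *
          (∏ j ∈ k.support, β j ^ k j) * B (ν - k) := by
  -- split off k = 0 on the RHS
  rw [← Finset.add_sum_erase _ _ (Finset.mem_Iic.mpr (zero_le (a := ν)))]
  have h0 : ((∏ j ∈ ν.support, (ν j).choose ((0 : ℕ →₀ ℕ) j)) : ℝ) *
      Λ ((0 : ℕ →₀ ℕ).sum fun _ n => n) *
      (∏ j ∈ (0 : ℕ →₀ ℕ).support, β j ^ (0 : ℕ →₀ ℕ) j) * B (ν - 0) = B ν := by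
    simp [hΛ0]
  rw [h0, add_comm (B ν)]
  congr 1
  -- rewrite Λ (deg k) via lambda_rec on the RHS
  have hrw : ∀ k ∈ (Finset.Iic ν).erase 0,
      ((∏ j ∈ ν.support, (ν j).choose (k j)) : ℝ) *
          Λ (k.sum fun _ n => n) *
          (∏ j ∈ k.support, β j ^ k j) * B (ν - k)
      = ∑ l ∈ (Finset.Iic k).erase k,
          ((∏ j ∈ ν.support, (ν j).choose (k j)) : ℝ) *
            ((∏ j ∈ k.support, ((k j).choose (l j) : ℝ)) * Λ (l.sum fun _ n => n)) *
            (∏ j ∈ k.support, β j ^ k j) * B (ν - k) := by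
    intro k hk
    have hk0 : k ≠ 0 := (Finset.mem_erase.mp hk).1
    rw [← lambda_rec Λ hΛ0 hΛ k hk0, Finset.mul_sum, Finset.sum_mul, Finset.sum_mul]
  rw [Finset.sum_congr rfl hrw]
  have hlw : ∀ m ∈ (Finset.Iic ν).erase ν,
      ((∏ j ∈ ν.support, (ν j).choose (m j)) : ℝ) *
          (∏ j ∈ (ν - m).support, β j ^ ((ν - m) j)) *
          (∑ l ∈ Finset.Iic m,
            ((∏ j ∈ m.support, (m j).choose (l j)) : ℝ) *
              Λ (l.sum fun _ n => n) *
              (∏ j ∈ l.support, β j ^ l j) * B (m - l))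
      = ∑ l ∈ Finset.Iic m,
          ((∏ j ∈ ν.support, (ν j).choose (m j)) : ℝ) *
            (∏ j ∈ (ν - m).support, β j ^ ((ν - m) j)) *
            (((∏ j ∈ m.support, (m j).choose (l j)) : ℝ) *
              Λ (l.sum fun _ n => n) *
              (∏ j ∈ l.support, β j ^ l j) * B (m - l)) := by
    intro m _
    rw [Finset.mul_sum]
  rw [Finset.sum_congr rfl hlw]
  -- turn both double sums into sums over sigma types
  rw [Finset.sum_sigma' ((Finset.Iic ν).erase ν) (fun m => Finset.Iic m),
    Finset.sum_sigma' ((Finset.Iic ν).erase 0) (fun k => (Finset.Iic k).erase k)]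
  -- now a bijection between the sigma sets
  refine Finset.sum_nbij' (fun x => ⟨ν - x.1 + x.2, x.2⟩) (fun x => ⟨ν - x.1 + x.2, x.2⟩)
    ?_ ?_ ?_ ?_ ?_
  · -- maps into target
    rintro ⟨m, l⟩ hx
    rw [Finset.mem_sigma, Finset.mem_erase, Finset.mem_Iic, Finset.mem_Iic] at hx
    obtain ⟨⟨hmne, hmle⟩, hlm⟩ := hx
    rw [Finset.mem_sigma, Finset.mem_erase, Finset.mem_erase, Finset.mem_Iic, Finset.mem_Iic]
    have hsub0 : ν - m ≠ 0 := by
      rw [Ne, tsub_eq_zero_iff_le]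
      intro h
      exact hmne (le_antisymm hmle h)
    refine ⟨⟨?_, ?_⟩, ?_, ?_⟩
    · -- ν - m + l ≠ 0
      intro h
      rw [add_eq_zero] at h
      exact hsub0 h.1
    · -- ν - m + l ≤ ν
      calc ν - m + l ≤ ν - m + m := add_le_add_right hlm _
        _ = ν := tsub_add_cancel_of_le hmle
    · -- l ≠ ν - m + l
      intro h
      apply hsub0
      have := right_eq_add.mp h
      exact this
    · exact le_add_self
  · rintro ⟨k, l⟩ hx
    rw [Finset.mem_sigma, Finset.mem_erase, Finset.mem_erase, Finset.mem_Iic,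
      Finset.mem_Iic] at hx
    obtain ⟨⟨hk0, hkle⟩, hlk, hllek⟩ := hx
    rw [Finset.mem_sigma, Finset.mem_erase, Finset.mem_Iic, Finset.mem_Iic]
    refine ⟨⟨?_, ?_⟩, le_add_self⟩
    · -- ν - k + l ≠ ν
      intro h
      dsimp only at h
      have h2 : ν - k + l = ν - k + k := by rw [h, tsub_add_cancel_of_le hkle]
      exact hlk (add_left_cancel h2)
    · calc ν - k + l ≤ ν - k + k := add_le_add_right hllek _
        _ = ν := tsub_add_cancel_of_le hkle
  · -- left inverse
    rintro ⟨m, l⟩ hx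
    rw [Finset.mem_sigma, Finset.mem_erase, Finset.mem_Iic, Finset.mem_Iic] at hx
    obtain ⟨⟨hmne, hmle⟩, hlm⟩ := hx
    have hkey : ν - (ν - m + l) + l = m := by
      rw [tsub_add_eq_tsub_tsub, tsub_tsub_cancel_of_le hmle, tsub_add_cancel_of_le hlm]
    dsimp only
    rw [hkey]
  · -- right inverse
    rintro ⟨k, l⟩ hx
    rw [Finset.mem_sigma, Finset.mem_erase, Finset.mem_erase, Finset.mem_Iic,
      Finset.mem_Iic] at hx
    obtain ⟨⟨hk0, hkle⟩, hlk, hllek⟩ := hx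
    have hkey : ν - (ν - k + l) + l = k := by
      rw [tsub_add_eq_tsub_tsub, tsub_tsub_cancel_of_le hkle, tsub_add_cancel_of_le hllek]
    dsimp only
    rw [hkey]
  · -- value equality
    rintro ⟨m, l⟩ hx
    rw [Finset.mem_sigma, Finset.mem_erase, Finset.mem_Iic, Finset.mem_Iic] at hx
    obtain ⟨⟨hmne, hmle⟩, hlm⟩ := hx
    set k := ν - m + l with hkdef
    have hkle : k ≤ ν := by
      calc ν - m + l ≤ ν - m + m := add_le_add_right hlm _
        _ = ν := tsub_add_cancel_of_le hmle
    have hlk : l ≤ k := le_add_self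
    -- ν - k = m - l
    have hvk : ν - k = m - l := by
      rw [hkdef, tsub_add_eq_tsub_tsub, tsub_tsub_cancel_of_le hmle]
    -- β products: (ν - m) and l combine to k
    have hbeta : (∏ j ∈ (ν - m).support, β j ^ ((ν - m) j)) *
        (∏ j ∈ l.support, β j ^ l j) = ∏ j ∈ k.support, β j ^ k j := by
      rw [hkdef, betaprod_add]
    -- choose products
    have hchoose : (∏ j ∈ ν.support, (ν j).choose (m j)) *
        (∏ j ∈ m.support, (m j).choose (l j))
        = (∏ j ∈ ν.support, (ν j).choose (k j)) *
          (∏ j ∈ k.support, (k j).choose (l j)) := by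
      rw [← prod_choose_extend m l hlm (supp_mono hmle),
        ← prod_choose_extend k l hlk (supp_mono hkle),
        ← Finset.prod_mul_distrib, ← Finset.prod_mul_distrib]
      refine Finset.prod_congr rfl fun j _ => ?_
      have h1 : m j ≤ ν j := Finsupp.le_def.mp hmle j
      have h2 : l j ≤ m j := Finsupp.le_def.mp hlm j
      have h3 : k j = ν j - m j + l j := by
        rw [hkdef]
        simp [Finsupp.tsub_apply, Finsupp.add_apply]
      rw [h3]
      exact myChoose (ν j) (m j) (l j) h1 h2
    -- now finish
    simp only
    rw [hvk]
    have hcast : ((∏ j ∈ ν.support, (ν j).choose (m j)) : ℝ) *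
        ((∏ j ∈ m.support, (m j).choose (l j)) : ℝ)
        = ((∏ j ∈ ν.support, (ν j).choose (k j)) : ℝ) *
          (∏ j ∈ k.support, ((k j).choose (l j) : ℝ)) := by
      exact_mod_cast congrArg (Nat.cast : ℕ → ℝ) hchoose
    linear_combination (Λ (l.sum fun _ n => n) * B (m - l)) *
      ((∏ j ∈ (ν - m).support, β j ^ ((ν - m) j)) * (∏ j ∈ l.support, β j ^ l j) * hcast
        + ((∏ j ∈ ν.support, ((ν j).choose (k j) : ℝ)) *
            (∏ j ∈ k.support, ((k j).choose (l j) : ℝ))) * hbeta)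


/-- Recursive estimate (Lemma `recur2`): if non-negative numbers `𝔸_ν`, `𝔹_ν` indexed by
finitely supported multi-indices satisfy
`𝔸_ν ≤ ∑_{m ≤ ν, m ≠ ν} C(ν,m) β^{ν−m} 𝔸_m + 𝔹_ν` for every `ν`, then
`𝔸_ν ≤ ∑_{k ≤ ν} C(ν,k) Λ_{|k|} β^k 𝔹_{ν−k}` for all `ν`, where `Λ` are the
ordered Bell numbers. -/
theorem recursive_estimate_two
    (β : ℕ → ℝ) (hβ : ∀ j, 0 ≤ β j)
    (A B : (ℕ →₀ ℕ) → ℝ)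
    (hA : ∀ ν, 0 ≤ A ν) (hB : ∀ ν, 0 ≤ B ν)
    (hrec : ∀ ν : ℕ →₀ ℕ,
      A ν ≤ (∑ m ∈ (Finset.Iic ν).erase ν,
          ((∏ j ∈ ν.support, (ν j).choose (m j)) : ℝ) *
            (∏ j ∈ (ν - m).support, β j ^ ((ν - m) j)) * A m) + B ν)
    (Λ : ℕ → ℝ) (hΛ0 : Λ 0 = 1)
    (hΛ : ∀ n : ℕ, 1 ≤ n → Λ n = ∑ i ∈ Finset.range n, (n.choose i : ℝ) * Λ i) :
    ∀ ν : ℕ →₀ ℕ,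
      A ν ≤ ∑ k ∈ Finset.Iic ν,
        ((∏ j ∈ ν.support, (ν j).choose (k j)) : ℝ) *
          Λ (k.sum fun _ n => n) *
          (∏ j ∈ k.support, β j ^ k j) * B (ν - k) := by
  suffices H : ∀ n : ℕ, ∀ ν : ℕ →₀ ℕ, (ν.sum fun _ x => x) < n →
      A ν ≤ ∑ k ∈ Finset.Iic ν,
        ((∏ j ∈ ν.support, (ν j).choose (k j)) : ℝ) *
          Λ (k.sum fun _ n => n) *
          (∏ j ∈ k.support, β j ^ k j) * B (ν - k) by
    intro ν
    exact H ((ν.sum fun _ x => x) + 1) ν (Nat.lt_succ_self _)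
  intro n
  induction n with
  | zero => intro ν h; exact absurd h (Nat.not_lt_zero _)
  | succ n ih =>
    intro ν hν
    calc A ν ≤ (∑ m ∈ (Finset.Iic ν).erase ν,
          ((∏ j ∈ ν.support, (ν j).choose (m j)) : ℝ) *
            (∏ j ∈ (ν - m).support, β j ^ ((ν - m) j)) * A m) + B ν := hrec ν
      _ ≤ (∑ m ∈ (Finset.Iic ν).erase ν,
          ((∏ j ∈ ν.support, (ν j).choose (m j)) : ℝ) *
            (∏ j ∈ (ν - m).support, β j ^ ((ν - m) j)) *
            (∑ l ∈ Finset.Iic m,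
              ((∏ j ∈ m.support, (m j).choose (l j)) : ℝ) *
                Λ (l.sum fun _ n => n) *
                (∏ j ∈ l.support, β j ^ l j) * B (m - l))) + B ν := by
        apply add_le_add_left
        apply Finset.sum_le_sum
        intro m hm
        rw [Finset.mem_erase, Finset.mem_Iic] at hm
        obtain ⟨hmne, hmle⟩ := hm
        have hdeg : (m.sum fun _ x => x) < n :=
          lt_of_lt_of_le (deg_lt hmle hmne) (Nat.lt_succ_iff.mp hν)
        have hAm := ih m hdeg
        have hc : (0 : ℝ) ≤ ((∏ j ∈ ν.support, (ν j).choose (m j)) : ℝ) :=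
          Finset.prod_nonneg fun j _ => Nat.cast_nonneg _
        have hb : (0 : ℝ) ≤ ∏ j ∈ (ν - m).support, β j ^ ((ν - m) j) :=
          Finset.prod_nonneg fun j _ => pow_nonneg (hβ j) _
        exact mul_le_mul_of_nonneg_left hAm (mul_nonneg hc hb)
      _ = _ := swap_eq β B Λ hΛ0 hΛ ν
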